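/- There is an absolute constant C > 0 such that for every real matrix A ∈ ℝ^{m×n} with m ≥ n ≥ 4, there exist an integer d ≤ n/4 and a matrix V ∈ ℝ^{d×n} whose rows are orthonormal (V Vᵀ = I_d) such that every row of the matrix A(I − VᵀV) has ℓ₂-norm at most C · herdisc(A) · log(8m/n). -/

import Mathlib

open Matrix

/-- The discrepancy of a real matrix `A` with respect to colorings `x ∈ {-1,1}^n`. -/
noncomputable def disc {m n : Type*} [Fintype m] [Fintype n] (A : Matrix m n ℝ) : ℝ :=
  sInf {d : ℝ | ∃ x : n → ℝ, (∀ i, x i = 1 ∨ x i = -1) ∧ d = ‖A.mulVec x‖}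

/-- The hereditary discrepancy of `A`: the maximum of `disc B` over all matrices `B`
obtained from `A` by deleting a subset of the columns. -/
noncomputable def herdisc {m n : Type*} [Fintype m] [Fintype n] (A : Matrix m n ℝ) : ℝ :=
  sSup {d : ℝ | ∃ S : Finset n, d = disc (A.submatrix id (fun j : S => (j : n)))}

open Finset MeasureTheory
open scoped ENNReal



theorem sort_factor {d n : ℕ} (g : Fin d → Fin n) (hg : StrictMono g) (τ : Equiv.Perm (Fin d)) :
    Tuple.sort (g ∘ τ) = τ⁻¹ := by
  set ρ := Tuple.sort (g ∘ τ) with hρ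
  have hinj : Function.Injective (g ∘ τ) := hg.injective.comp τ.injective
  have hmono : Monotone ((g ∘ τ) ∘ ρ) := Tuple.monotone_sort _
  have hsm : StrictMono ((g ∘ τ) ∘ ρ) :=
    hmono.strictMono_of_injective (hinj.comp ρ.injective)
  have hrange : Set.range ((g ∘ τ) ∘ ρ) = Set.range g := by
    rw [Function.comp_assoc]
    exact ((τ.surjective.comp ρ.surjective).range_comp g)
  haveI : WellFoundedLT (Fin d) := inferInstance
  have heq : (g ∘ τ) ∘ ρ = g := (StrictMono.range_inj hsm hg).mp hrange
  have : ∀ x, τ (ρ x) = x := by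
    intro x
    have := congrFun heq x
    exact hg.injective this
  ext x
  have h2 : ρ x = τ.symm x := by
    apply τ.injective; rw [this x]; simp
  rw [show ρ x = τ.symm x from h2]; rfl

theorem cauchy_binet {R : Type*} [CommRing R] {d n : ℕ}
    (M : Matrix (Fin d) (Fin n) R) (N : Matrix (Fin n) (Fin d) R) :
    (M * N).det = ∑ g ∈ Finset.univ.filter (fun g : Fin d → Fin n => StrictMono g),
      (M.submatrix id g).det * (N.submatrix g id).det := by
  classical
  have h1 : (M * N).det
      = ∑ p : Fin d → Fin n, (∏ i, N (p i) i) * (M.submatrix id p).det := by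
    have : (M * N).det = ∑ p : Fin d → Fin n, ∑ σ : Equiv.Perm (Fin d),
        ((Equiv.Perm.sign σ : ℤ) : R) * ∏ i, M (σ i) (p i) * N (p i) i := by
      simp only [det_apply', mul_apply, prod_univ_sum, mul_sum, Fintype.piFinset_univ]
      rw [Finset.sum_comm]
    rw [this]
    refine Finset.sum_congr rfl fun p _ => ?_
    rw [det_apply', Finset.mul_sum]
    refine Finset.sum_congr rfl fun σ _ => ?_
    simp only [submatrix_apply, id_eq, prod_mul_distrib]
    ring
  have h2 : (M * N).det = ∑ p ∈ Finset.univ.filter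
      (fun p : Fin d → Fin n => Function.Injective p),
      (∏ i, N (p i) i) * (M.submatrix id p).det := by
    rw [h1]
    refine (Finset.sum_subset (filter_subset _ _) fun p _ hp => ?_).symm
    have hni : ¬ Function.Injective p := by simpa using hp
    obtain ⟨i, j, hij, hne⟩ : ∃ i j, p i = p j ∧ i ≠ j := by
      unfold Function.Injective at hni; push_neg at hni
      obtain ⟨i, j, h1', h2'⟩ := hni; exact ⟨i, j, h1', h2'⟩
    have : (M.submatrix id p).det = 0 :=
      det_zero_of_column_eq hne (fun k => by simp [submatrix_apply, hij])
    simp [this]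
  have h3 : ∑ g ∈ Finset.univ.filter (fun g : Fin d → Fin n => StrictMono g),
      (M.submatrix id g).det * (N.submatrix g id).det
      = ∑ x ∈ (Finset.univ.filter (fun g : Fin d → Fin n => StrictMono g)) ×ˢ
          (Finset.univ : Finset (Equiv.Perm (Fin d))),
          (∏ i, N (x.1 (x.2 i)) i) * (((Equiv.Perm.sign x.2 : ℤ) : R) * (M.submatrix id x.1).det) := by
    rw [Finset.sum_product]
    refine Finset.sum_congr rfl fun g _ => ?_
    rw [det_apply' (N.submatrix g id), Finset.mul_sum]
    refine Finset.sum_congr rfl fun τ _ => ?_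
    simp only [submatrix_apply, id_eq]
    ring
  rw [h2, h3]
  refine Finset.sum_nbij' (fun p => (p ∘ Tuple.sort p, (Tuple.sort p)⁻¹))
    (fun x => x.1 ∘ x.2) ?_ ?_ ?_ ?_ ?_
  · intro p hp
    have hinj : Function.Injective p := by simpa using hp
    simp only [Finset.mem_product, Finset.mem_filter, Finset.mem_univ, true_and]
    exact ⟨(Tuple.monotone_sort p).strictMono_of_injective
      (hinj.comp (Tuple.sort p).injective), trivial⟩
  · intro x hx
    simp only [Finset.mem_product, Finset.mem_filter, Finset.mem_univ, true_and] at hx ⊢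
    exact hx.1.injective.comp x.2.injective
  · intro p hp
    show (p ∘ ⇑(Tuple.sort p)) ∘ ⇑(Tuple.sort p)⁻¹ = p
    funext i; simp
  · intro x hx
    simp only [Finset.mem_product, Finset.mem_filter, Finset.mem_univ, true_and] at hx
    have h := sort_factor x.1 hx.1 x.2
    ext1
    · funext i
      simp [h]
    · simp [h]
  · intro p hp
    have hinj : Function.Injective p := by simpa using hp
    have hfac : (p ∘ Tuple.sort p) ∘ ((Tuple.sort p)⁻¹ : Equiv.Perm (Fin d)) = p := by
      funext i; simp
    have hdet : (M.submatrix id p).det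
        = ((Equiv.Perm.sign ((Tuple.sort p)⁻¹ : Equiv.Perm (Fin d)) : ℤ) : R)
          * (M.submatrix id (p ∘ Tuple.sort p)).det := by
      conv_lhs => rw [← hfac]
      rw [show M.submatrix id ((p ∘ Tuple.sort p) ∘ ((Tuple.sort p)⁻¹ : Equiv.Perm (Fin d)))
          = (M.submatrix id (p ∘ Tuple.sort p)).submatrix id ((Tuple.sort p)⁻¹ : Equiv.Perm (Fin d))
          from rfl]
      rw [det_permute']
    rw [hdet]
    have hN : (∏ i, N (p i) i) = ∏ i, N ((p ∘ Tuple.sort p) (((Tuple.sort p)⁻¹ : Equiv.Perm (Fin d)) i)) i := by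
      refine Finset.prod_congr rfl fun i _ => ?_
      simp
    rw [hN]

theorem disc_set_finite {m n : Type*} [Fintype m] [Fintype n] (A : Matrix m n ℝ) :
    {d : ℝ | ∃ x : n → ℝ, (∀ i, x i = 1 ∨ x i = -1) ∧ d = ‖A.mulVec x‖}.Finite := by
  have h : {d : ℝ | ∃ x : n → ℝ, (∀ i, x i = 1 ∨ x i = -1) ∧ d = ‖A.mulVec x‖}
      ⊆ (fun x : n → ℝ => ‖A.mulVec x‖) '' (Set.pi Set.univ fun _ => ({1, -1} : Set ℝ)) := by
    rintro d ⟨x, hx, rfl⟩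
    exact ⟨x, fun i _ => by rcases hx i with h | h <;> simp [h], rfl⟩
  exact (Set.Finite.image _ ((Set.Finite.pi fun _ => (Set.finite_singleton (-1:ℝ)).insert 1))).subset h

theorem disc_nonneg {m n : Type*} [Fintype m] [Fintype n] (A : Matrix m n ℝ) : 0 ≤ disc A :=
  Real.sInf_nonneg fun d hd => by obtain ⟨x, -, rfl⟩ := hd; positivity

theorem disc_le_herdisc {m n : Type*} [Fintype m] [Fintype n] (A : Matrix m n ℝ) (S : Finset n) :
    disc (A.submatrix id (fun j : S => (j : n))) ≤ herdisc A := by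
  apply le_csSup
  · have : {d : ℝ | ∃ S : Finset n, d = disc (A.submatrix id (fun j : S => (j : n)))}
        = Set.range (fun S : Finset n => disc (A.submatrix id (fun j : S => (j : n)))) := by
      ext d; simp [Set.range, eq_comm]
    rw [this]
    exact (Set.finite_range _).bddAbove
  · exact ⟨S, rfl⟩

theorem herdisc_nonneg {m n : Type*} [Fintype m] [Fintype n] (A : Matrix m n ℝ) :
    0 ≤ herdisc A :=
  le_trans (disc_nonneg _) (disc_le_herdisc A Finset.univ)

theorem exists_coloring {m n : ℕ} (A : Matrix (Fin m) (Fin n) ℝ) (S : Finset (Fin n)) :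
    ∃ x : Fin n → ℝ, (∀ i ∈ S, x i = 1 ∨ x i = -1) ∧ (∀ i ∉ S, x i = 0) ∧
      ∀ j, |A.mulVec x j| ≤ herdisc A := by
  classical
  set B := A.submatrix id (fun j : S => (j : Fin n)) with hB
  have hfin := disc_set_finite B
  have hne : {d : ℝ | ∃ y : S → ℝ, (∀ i, y i = 1 ∨ y i = -1) ∧ d = ‖B.mulVec y‖}.Nonempty :=
    ⟨‖B.mulVec (fun _ => 1)‖, fun _ => 1, fun _ => Or.inl rfl, rfl⟩
  have hmem := hne.csInf_mem hfin
  obtain ⟨y, hy, hval⟩ := hmem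
  refine ⟨fun i => if h : i ∈ S then y ⟨i, h⟩ else 0, ?_, ?_, ?_⟩
  · intro i hi; simpa [hi] using hy ⟨i, hi⟩
  · intro i hi; simp [hi]
  · intro j
    have hrow : A.mulVec (fun i => if h : i ∈ S then y ⟨i, h⟩ else 0) j = B.mulVec y j := by
      have h1 : A.mulVec (fun i => if h : i ∈ S then y ⟨i, h⟩ else 0) j
          = ∑ i : Fin n, A j i * (if h : i ∈ S then y ⟨i, h⟩ else 0) := by
        simp [Matrix.mulVec, dotProduct]
      have h2 : B.mulVec y j = ∑ i : {x // x ∈ S}, A j i * y i := by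
        simp [Matrix.mulVec, dotProduct, hB]
      rw [h1, h2]
      rw [← Finset.sum_subset (Finset.subset_univ S) (fun i _ hi => by simp [hi])]
      rw [← Finset.sum_attach S (fun i => A j i * (if h : i ∈ S then y ⟨i, h⟩ else 0))]
      refine Finset.sum_congr rfl fun i _ => ?_
      simp [i.2]
    rw [hrow]
    calc |B.mulVec y j| ≤ ‖B.mulVec y‖ := by
          simpa using norm_le_pi_norm (B.mulVec y) j
      _ = disc B := hval ▸ rfl
      _ ≤ herdisc A := disc_le_herdisc A S

section
variable {m n : ℕ} (A : Matrix (Fin m) (Fin n) ℝ)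

theorem rounding (ℓ : ℕ) :
    ∀ (T : Finset (Fin n)) (c : Fin n → ℝ),
      (∀ i, |c i| ≤ 1) → (∀ i ∉ T, c i = 0) → (∀ i, ∃ z : ℤ, c i = (z : ℝ) / 2 ^ ℓ) →
      ∃ x : Fin n → ℝ, (∀ i ∈ T, x i = 1 ∨ x i = -1) ∧ (∀ i ∉ T, x i = 0) ∧
        ∀ j, |A.mulVec (c - x) j| ≤ (2 - ((2 : ℝ) ^ ℓ)⁻¹) * herdisc A := by
  induction ℓ with
  | zero =>
    intro T c hc1 hc0 hcz
    classical
    set S := T.filter (fun i => c i = 0) with hS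
    obtain ⟨χ, hχ1, hχ0, hχb⟩ := exists_coloring A S
    refine ⟨fun i => if i ∈ T then (if c i = 0 then χ i else c i) else 0, ?_, ?_, ?_⟩
    · intro i hi
      by_cases h0 : c i = 0
      · have := hχ1 i (by simp [hS, hi, h0])
        simpa [hi, h0] using this
      · obtain ⟨z, hz⟩ := hcz i
        rw [pow_zero, div_one] at hz
        have hz1 : |z| ≤ 1 := by
          have : |(z : ℝ)| ≤ 1 := hz ▸ hc1 i
          exact_mod_cast this
        obtain ⟨hbl, hbr⟩ := abs_le.mp hz1
        interval_cases z
        · have hne : c i = -1 := by exact_mod_cast hz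
          simp [hi, hne]
        · have hne : c i = 0 := by exact_mod_cast hz
          exact absurd hne h0
        · have hne : c i = 1 := by exact_mod_cast hz
          simp [hi, hne]
    · intro i hi; simp [hi]
    · intro j
      have hcx : (c - fun i => if i ∈ T then (if c i = 0 then χ i else c i) else 0) = -χ := by
        funext i
        by_cases hiT : i ∈ T
        · by_cases h0 : c i = 0
          · simp [hiT, h0]
          · have : χ i = 0 := hχ0 i (by simp [hS, h0])
            simp [hiT, h0, this]
        · have hS' : i ∉ S := fun h => hiT (Finset.mem_of_mem_filter i h)
          simp [hiT, hc0 i hiT, hχ0 i hS']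
      rw [hcx, Matrix.mulVec_neg]
      simp only [Pi.neg_apply, abs_neg, pow_zero, inv_one]
      linarith [hχb j]
  | succ ℓ ih =>
    intro T c hc1 hc0 hcz
    classical
    set S := T.filter (fun i => ¬ ∃ w : ℤ, c i = (w : ℝ) / 2 ^ ℓ) with hS
    obtain ⟨χ, hχ1, hχ0, hχb⟩ := exists_coloring A S
    set c' : Fin n → ℝ := fun i => c i - ((2 : ℝ) ^ (ℓ+1))⁻¹ * χ i with hc'
    have hpow : (0 : ℝ) < 2 ^ (ℓ+1) := by positivity
    have hSfact : ∀ i ∈ S, ∃ z : ℤ, Odd z ∧ c i = (z : ℝ) / 2 ^ (ℓ+1) ∧ |z| ≤ 2 ^ (ℓ+1) - 1 := by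
      intro i hi
      obtain ⟨z, hz⟩ := hcz i
      have hodd : Odd z := by
        rcases Int.even_or_odd z with he | ho
        · exfalso
          obtain ⟨w, hw⟩ := he
          have : c i = (w : ℝ) / 2 ^ ℓ := by
            rw [hz, hw]
            push_cast
            field_simp
            ring
          have := (Finset.mem_filter.mp hi).2
          exact this ⟨w, ‹c i = (w : ℝ) / 2 ^ ℓ›⟩
        · exact ho
      have habs : |z| ≤ 2 ^ (ℓ+1) := by
        have h1 : |(z : ℝ)| ≤ 2 ^ (ℓ+1) := by
          have := hc1 i
          rw [hz, abs_div, abs_of_pos hpow, div_le_one hpow] at this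
          simpa using this
        exact_mod_cast h1
      have hne : |z| ≠ 2 ^ (ℓ+1) := by
        intro h
        have h2 : Odd (|z|) := by
          rcases abs_choice z with h' | h'
          · rw [h']; exact hodd
          · rw [h']; exact hodd.neg
        rw [h] at h2
        exact (Int.not_odd_iff_even.mpr (Int.even_pow.mpr ⟨even_two, Nat.succ_ne_zero ℓ⟩)) h2
      exact ⟨z, hodd, hz, by omega⟩
    have hSfact2 : ∀ i ∈ S, (∃ w : ℤ, c' i = (w : ℝ) / 2 ^ ℓ) ∧ |c' i| ≤ 1 := by
      intro i hi
      obtain ⟨z, hodd, hz, habs⟩ := hSfact i hi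
      have hχv : χ i = 1 ∨ χ i = -1 := hχ1 i hi
      have key : ∃ e : ℤ, (χ i : ℝ) = (e : ℝ) ∧ Odd e ∧ |e| = 1 := by
        rcases hχv with h | h
        · exact ⟨1, by simp [h], odd_one, by simp⟩
        · exact ⟨-1, by simp [h], by exact ⟨-1, by ring⟩, by simp⟩
      obtain ⟨e, he, heodd, heabs⟩ := key
      have heven : Even (z - e) := hodd.sub_odd heodd
      obtain ⟨w, hw⟩ := heven
      have hzw : z - e = 2 * w := by omega
      have hc'i : c' i = ((z - e : ℤ) : ℝ) / 2 ^ (ℓ+1) := by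
        show c i - ((2:ℝ) ^ (ℓ+1))⁻¹ * χ i = ((z - e : ℤ) : ℝ) / 2 ^ (ℓ+1)
        rw [hz, he]
        push_cast
        ring
      constructor
      · refine ⟨w, ?_⟩
        rw [hc'i, hzw]
        push_cast
        rw [pow_succ]
        field_simp
      · rw [hc'i, abs_div, abs_of_pos hpow, div_le_one hpow]
        have : |z - e| ≤ 2 ^ (ℓ+1) := by
          have h5 : |z - e| ≤ |z| + |e| := abs_sub z e
          linarith
        calc |((z - e : ℤ) : ℝ)| = ((|z - e| : ℤ) : ℝ) := by push_cast [Int.cast_abs]; ring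
          _ ≤ ((2 ^ (ℓ+1) : ℤ) : ℝ) := by exact_mod_cast this
          _ = 2 ^ (ℓ+1) := by push_cast; ring
    have hc'supp : ∀ i ∉ T, c' i = 0 := by
      intro i hi
      have hiS : i ∉ S := fun h => hi (Finset.mem_of_mem_filter i h)
      simp [hc', hc0 i hi, hχ0 i hiS]
    have hc'1 : ∀ i, |c' i| ≤ 1 := by
      intro i
      by_cases hiS : i ∈ S
      · exact (hSfact2 i hiS).2
      · have : χ i = 0 := hχ0 i hiS
        simpa [hc', this] using hc1 i
    have hc'dyadic : ∀ i, ∃ w : ℤ, c' i = (w : ℝ) / 2 ^ ℓ := by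
      intro i
      by_cases hiS : i ∈ S
      · exact (hSfact2 i hiS).1
      · have hci : c' i = c i := by simp [hc', hχ0 i hiS]
        by_cases hiT : i ∈ T
        · have := Finset.mem_filter.not.mp hiS
          push_neg at this
          obtain ⟨w, hw⟩ := this hiT
          exact ⟨w, by rw [hci, hw]⟩
        · exact ⟨0, by rw [hci, hc0 i hiT]; simp⟩
    obtain ⟨x, hx1, hx0, hxb⟩ := ih T c' hc'1 hc'supp hc'dyadic
    refine ⟨x, hx1, hx0, fun j => ?_⟩
    have hdecomp : c - x = (((2:ℝ) ^ (ℓ+1))⁻¹ • χ) + (c' - x) := by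
      funext i
      have : c' i = c i - ((2:ℝ) ^ (ℓ+1))⁻¹ * χ i := rfl
      simp only [Pi.sub_apply, Pi.add_apply, Pi.smul_apply, smul_eq_mul, this]
      ring
    rw [hdecomp, Matrix.mulVec_add, Matrix.mulVec_smul]
    have hb1 := hχb j
    have hb2 := hxb j
    have hH := herdisc_nonneg A
    have harith : ((2:ℝ)^(ℓ+1))⁻¹ * 2 = ((2:ℝ)^ℓ)⁻¹ := by
      rw [pow_succ]
      have : (2:ℝ)^ℓ ≠ 0 := by positivity
      field_simp
    calc |(((2:ℝ) ^ (ℓ+1))⁻¹ • A.mulVec χ + A.mulVec (c' - x)) j|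
        ≤ |(((2:ℝ) ^ (ℓ+1))⁻¹ • A.mulVec χ) j| + |A.mulVec (c' - x) j| := by
          simpa using abs_add_le ((((2:ℝ) ^ (ℓ+1))⁻¹ • A.mulVec χ) j) (A.mulVec (c' - x) j)
      _ ≤ ((2:ℝ)^(ℓ+1))⁻¹ * herdisc A + (2 - ((2:ℝ)^ℓ)⁻¹) * herdisc A := by
          have h3 : |(((2:ℝ) ^ (ℓ+1))⁻¹ • A.mulVec χ) j| = ((2:ℝ)^(ℓ+1))⁻¹ * |A.mulVec χ j| := by
            simp [abs_mul, abs_of_pos hpow]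
          rw [h3]
          have h4 : ((2:ℝ)^(ℓ+1))⁻¹ * |A.mulVec χ j| ≤ ((2:ℝ)^(ℓ+1))⁻¹ * herdisc A := by
            apply mul_le_mul_of_nonneg_left hb1
            positivity
          linarith
      _ ≤ (2 - ((2:ℝ) ^ (ℓ+1))⁻¹) * herdisc A := by nlinarith

end

section
variable {m n : ℕ} (A : Matrix (Fin m) (Fin n) ℝ)

noncomputable def expand {d : ℕ} (s : Fin d → Fin n) (u : Fin d → ℝ) : Fin n → ℝ :=
  fun k => ∑ i, if k = s i then u i else 0

theorem expand_s {d : ℕ} {s : Fin d → Fin n} (hs : Function.Injective s) (u : Fin d → ℝ)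
    (i : Fin d) : expand s u (s i) = u i := by
  unfold expand
  rw [Finset.sum_eq_single i]
  · simp
  · intro i' _ hne
    have : s i ≠ s i' := fun h => hne (hs h).symm
    simp [this]
  · simp

theorem expand_off {d : ℕ} {s : Fin d → Fin n} (u : Fin d → ℝ) (k : Fin n)
    (hk : ∀ i, k ≠ s i) : expand s u k = 0 := by
  unfold expand
  exact Finset.sum_eq_zero fun i _ => by simp [hk i]

theorem expand_sub {d : ℕ} (s : Fin d → Fin n) (u v : Fin d → ℝ) :
    expand s (u - v) = expand s u - expand s v := by
  funext k
  show (∑ i, if k = s i then (u - v) i else 0) = _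
  rw [Pi.sub_apply]
  show _ = (∑ i, if k = s i then u i else 0) - (∑ i, if k = s i then v i else 0)
  rw [← Finset.sum_sub_distrib]
  refine Finset.sum_congr rfl fun i _ => by split <;> simp

theorem mulVec_expand {d : ℕ} (r : Fin d → Fin m) (s : Fin d → Fin n) (u : Fin d → ℝ)
    (i : Fin d) : A.mulVec (expand s u) (r i) = (A.submatrix r s).mulVec u i := by
  show (∑ k, A (r i) k * expand s u k) = ∑ i', A (r i) (s i') * u i'
  unfold expand
  have h : ∀ k, A (r i) k * (∑ i', if k = s i' then u i' else 0)
      = ∑ i', if k = s i' then A (r i) k * u i' else 0 := by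
    intro k
    rw [Finset.mul_sum]
    exact Finset.sum_congr rfl fun i' _ => by split <;> simp
  simp_rw [h]
  rw [Finset.sum_comm]
  refine Finset.sum_congr rfl fun i' _ => ?_
  rw [Finset.sum_eq_single (s i')]
  · simp
  · intro k _ hk
    simp [hk]
  · simp

theorem det_le_pow {d : ℕ} (r : Fin d → Fin m) (s : Fin d → Fin n)
    (hs : Function.Injective s) :
    |(A.submatrix r s).det| ≤ (4 * herdisc A) ^ d := by
  classical
  rcases Nat.eq_zero_or_pos d with hd0 | hdpos
  · subst hd0
    simp [Matrix.det_fin_zero]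
  have hd : d ≠ 0 := Nat.pos_iff_ne_zero.mp hdpos
  set H := herdisc A with hHdef
  have hH0 : 0 ≤ H := herdisc_nonneg A
  set B := A.submatrix r s with hB
  have cover : ∀ ε > (0:ℝ), ∀ c : Fin d → ℝ, (∀ i, |c i| ≤ 1) →
      ∃ x : Fin d → ℝ, (∀ i, x i = 1 ∨ x i = -1) ∧
        ∀ i, |B.mulVec c i - B.mulVec x i| ≤ 2 * H + ε := by
    intro ε hε c hc
    set Mx : ℝ := 1 + ∑ i, ∑ k, |B i k| with hMx
    have hMx0 : 0 < Mx := by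
      have h0 : (0:ℝ) ≤ ∑ i, ∑ k, |B i k| := by positivity
      rw [hMx]; linarith
    obtain ⟨ℓ, hℓ⟩ := pow_unbounded_of_one_lt (R := ℝ) (Mx / ε) one_lt_two
    have hp0 : (0:ℝ) < 2 ^ ℓ := by positivity
    set c' : Fin d → ℝ := fun i => (⌊c i * 2 ^ ℓ⌋ : ℝ) / 2 ^ ℓ with hc'
    have hc'le : ∀ i, |c' i| ≤ 1 := by
      intro i
      rw [abs_le]
      obtain ⟨h1, h2⟩ := abs_le.mp (hc i)
      have e : c' i = (⌊c i * 2 ^ ℓ⌋ : ℝ) / 2 ^ ℓ := rfl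
      constructor
      · rw [e, le_div_iff₀ hp0]
        have h3 : ((-(2^ℓ) : ℤ) : ℝ) ≤ c i * 2 ^ ℓ := by push_cast; nlinarith
        have h4 := Int.le_floor.mpr h3
        calc (-1 : ℝ) * 2 ^ ℓ = ((-(2^ℓ) : ℤ) : ℝ) := by push_cast; ring
          _ ≤ (⌊c i * 2 ^ ℓ⌋ : ℝ) := by exact_mod_cast h4
      · rw [e, div_le_one hp0]
        calc ((⌊c i * 2 ^ ℓ⌋ : ℤ) : ℝ) ≤ c i * 2 ^ ℓ := Int.floor_le _
          _ ≤ 2 ^ ℓ := by nlinarith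
    have hc'close : ∀ i, |c i - c' i| ≤ ((2:ℝ) ^ ℓ)⁻¹ := by
      intro i
      have h1 : (⌊c i * 2 ^ ℓ⌋ : ℝ) ≤ c i * 2 ^ ℓ := Int.floor_le _
      have h2 : c i * 2 ^ ℓ < (⌊c i * 2 ^ ℓ⌋ : ℝ) + 1 := Int.lt_floor_add_one _
      have e : c' i = (⌊c i * 2 ^ ℓ⌋ : ℝ) / 2 ^ ℓ := rfl
      have hfd : c' i * 2 ^ ℓ = (⌊c i * 2 ^ ℓ⌋ : ℝ) := by
        rw [e]; field_simp
      have hid : ((2:ℝ) ^ ℓ)⁻¹ * 2 ^ ℓ = 1 := inv_mul_cancel₀ (ne_of_gt hp0)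
      rw [abs_le]
      constructor <;> nlinarith
    set T : Finset (Fin n) := Finset.image s Finset.univ with hT
    have hmemT : ∀ i, s i ∈ T := fun i => Finset.mem_image_of_mem s (Finset.mem_univ i)
    have hnotT : ∀ k, k ∉ T → ∀ i, k ≠ s i := by
      intro k hk i he
      exact hk (he ▸ hmemT i)
    obtain ⟨x, hx1, hx0, hxb⟩ := rounding A ℓ T (expand s c')
      (by
        intro k
        by_cases hk : ∃ i, k = s i
        · obtain ⟨i, rfl⟩ := hk
          rw [expand_s hs]
          exact hc'le i
        · push_neg at hk
          rw [expand_off _ _ hk]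
          norm_num)
      (fun k hk => expand_off _ _ (hnotT k hk))
      (by
        intro k
        by_cases hk : ∃ i, k = s i
        · obtain ⟨i, rfl⟩ := hk
          rw [expand_s hs]
          exact ⟨⌊c i * 2 ^ ℓ⌋, rfl⟩
        · push_neg at hk
          rw [expand_off _ _ hk]
          exact ⟨0, by simp⟩)
    set xt : Fin d → ℝ := fun i => x (s i) with hxt
    have hxt1 : ∀ i, xt i = 1 ∨ xt i = -1 := fun i => hx1 (s i) (hmemT i)
    have hxe : x = expand s xt := by
      funext k
      by_cases hk : ∃ i, k = s i
      · obtain ⟨i, rfl⟩ := hk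
        rw [expand_s hs]
      · push_neg at hk
        rw [expand_off _ _ hk]
        exact hx0 k (fun hmem => by
          obtain ⟨i, _, hi⟩ := Finset.mem_image.mp hmem
          exact hk i hi.symm)
    have hmid : ∀ i, |B.mulVec c' i - B.mulVec xt i| ≤ 2 * H := by
      intro i
      have h1 : A.mulVec (expand s c' - x) (r i) = B.mulVec c' i - B.mulVec xt i := by
        rw [hxe, ← expand_sub, mulVec_expand, Matrix.mulVec_sub]
        simp [hB]
      have h2 := hxb (r i)
      rw [h1] at h2
      have h3 : (2 - ((2:ℝ) ^ ℓ)⁻¹) * H ≤ 2 * H := by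
        have h4 : 0 ≤ ((2:ℝ) ^ ℓ)⁻¹ := by positivity
        nlinarith
      linarith
    refine ⟨xt, hxt1, fun i => ?_⟩
    have hclose : |B.mulVec c i - B.mulVec c' i| ≤ ε := by
      have h1 : B.mulVec c i - B.mulVec c' i = ∑ k, B i k * (c k - c' k) := by
        show (∑ k, B i k * c k) - (∑ k, B i k * c' k) = _
        rw [← Finset.sum_sub_distrib]
        exact Finset.sum_congr rfl fun k _ => by ring
      rw [h1]
      calc |∑ k, B i k * (c k - c' k)| ≤ ∑ k, |B i k * (c k - c' k)| :=
            Finset.abs_sum_le_sum_abs _ _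
        _ ≤ ∑ k, |B i k| * ((2:ℝ) ^ ℓ)⁻¹ := by
            refine Finset.sum_le_sum fun k _ => ?_
            rw [abs_mul]
            exact mul_le_mul_of_nonneg_left (hc'close k) (abs_nonneg _)
        _ = (∑ k, |B i k|) * ((2:ℝ) ^ ℓ)⁻¹ := by rw [Finset.sum_mul]
        _ ≤ Mx * ((2:ℝ) ^ ℓ)⁻¹ := by
            refine mul_le_mul_of_nonneg_right ?_ (by positivity)
            have h2 : (∑ k, |B i k|) ≤ ∑ i', ∑ k, |B i' k| :=
              Finset.single_le_sum (f := fun i' => ∑ k, |B i' k|)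
                (fun i' _ => by positivity) (Finset.mem_univ i)
            rw [hMx]; linarith
        _ ≤ ε := by
            have h3 : Mx < 2 ^ ℓ * ε := by
              rw [div_lt_iff₀ hε] at hℓ
              linarith
            have hid : ((2:ℝ) ^ ℓ)⁻¹ * 2 ^ ℓ = 1 := inv_mul_cancel₀ (ne_of_gt hp0)
            have hiv : (0:ℝ) < ((2:ℝ) ^ ℓ)⁻¹ := by positivity
            nlinarith
    have h5 := hmid i
    have h6 : |B.mulVec c i - B.mulVec xt i|
        ≤ |B.mulVec c i - B.mulVec c' i| + |B.mulVec c' i - B.mulVec xt i| :=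
      abs_sub_le _ _ _
    linarith
  -- volume argument
  have key : ∀ ε > (0:ℝ), |B.det| ≤ (4 * H + 2 * ε) ^ d := by
    intro ε hε
    set ρ : ℝ := 2 * H + ε with hρ
    have hρ0 : (0:ℝ) ≤ ρ := by rw [hρ]; linarith
    set box : Set (Fin d → ℝ) := Set.pi Set.univ (fun _ => Set.Icc (-1:ℝ) 1) with hbox
    have hincl : (Matrix.toLin' B) '' box ⊆
        ⋃ σ : Fin d → Bool, Metric.closedBall (B.mulVec (fun i => if σ i then 1 else -1)) ρ := by
      rintro y ⟨c, hcbox, rfl⟩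
      have hc : ∀ i, |c i| ≤ 1 := by
        intro i
        have := hcbox i (Set.mem_univ i)
        rw [abs_le]
        exact ⟨this.1, this.2⟩
      obtain ⟨x, hx1, hxb⟩ := cover ε hε c hc
      refine Set.mem_iUnion.mpr ⟨fun i => if x i = 1 then true else false, ?_⟩
      have hxeq : (fun i => if (if x i = 1 then true else false) then (1:ℝ) else -1) = x := by
        funext i
        rcases hx1 i with h | h <;> norm_num [h]
      rw [Metric.mem_closedBall, hxeq, Matrix.toLin'_apply]
      rw [dist_pi_le_iff hρ0]
      intro i
      rw [Real.dist_eq]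
      exact hxb i
    have himg : volume ((Matrix.toLin' B) '' box) = ENNReal.ofReal |B.det| * volume box := by
      rw [MeasureTheory.Measure.addHaar_image_linearMap volume (Matrix.toLin' B) box,
        LinearMap.det_toLin']
    have hvbox : volume box = ENNReal.ofReal 2 ^ d := by
      rw [hbox, volume_pi_pi]
      simp [Real.volume_Icc]
      norm_num
    have hvball : ∀ y : Fin d → ℝ, volume (Metric.closedBall y ρ) = ENNReal.ofReal (2 * ρ) ^ d := by
      intro y
      rw [closedBall_pi y hρ0, volume_pi_pi]
      simp [Real.volume_closedBall]
    have hchain : ENNReal.ofReal |B.det| * ENNReal.ofReal 2 ^ d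
        ≤ (2:ℝ≥0∞) ^ d * ENNReal.ofReal (2 * ρ) ^ d := by
      calc ENNReal.ofReal |B.det| * ENNReal.ofReal 2 ^ d
          = volume ((Matrix.toLin' B) '' box) := by rw [himg, hvbox]
        _ ≤ volume (⋃ σ : Fin d → Bool,
              Metric.closedBall (B.mulVec (fun i => if σ i then 1 else -1)) ρ) :=
            measure_mono hincl
        _ ≤ ∑ σ : Fin d → Bool, volume
              (Metric.closedBall (B.mulVec (fun i => if σ i then 1 else -1)) ρ) :=
            measure_iUnion_fintype_le _ _
        _ = (2:ℝ≥0∞) ^ d * ENNReal.ofReal (2 * ρ) ^ d := by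
            simp only [hvball]
            rw [Finset.sum_const, Finset.card_univ]
            have hcard : Fintype.card (Fin d → Bool) = 2 ^ d := by
              rw [Fintype.card_fun]; simp
            rw [hcard, nsmul_eq_mul]
            push_cast
            ring
    have hreal : |B.det| * 2 ^ d ≤ 2 ^ d * (2 * ρ) ^ d := by
      have h1 : ENNReal.ofReal (|B.det| * 2 ^ d) ≤ ENNReal.ofReal (2 ^ d * (2 * ρ) ^ d) := by
        rw [ENNReal.ofReal_mul (abs_nonneg _), ENNReal.ofReal_mul (by positivity : (0:ℝ) ≤ 2 ^ d)]
        rw [ENNReal.ofReal_pow (by norm_num : (0:ℝ) ≤ 2), ENNReal.ofReal_pow (by positivity : (0:ℝ) ≤ 2 * ρ)]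
        calc ENNReal.ofReal |B.det| * ENNReal.ofReal 2 ^ d
            ≤ (2:ℝ≥0∞) ^ d * ENNReal.ofReal (2 * ρ) ^ d := hchain
          _ = ENNReal.ofReal 2 ^ d * ENNReal.ofReal (2 * ρ) ^ d := by
              norm_num [ENNReal.ofReal_ofNat]
      rw [ENNReal.ofReal_le_ofReal_iff (by positivity)] at h1
      exact h1
    have hp2 : (0:ℝ) < 2 ^ d := by positivity
    have : |B.det| ≤ (2 * ρ) ^ d := by nlinarith [pow_nonneg (by positivity : (0:ℝ) ≤ 2*ρ) d]
    calc |B.det| ≤ (2 * ρ) ^ d := this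
      _ = (4 * H + 2 * ε) ^ d := by rw [hρ]; ring_nf
  -- pass to the limit
  by_contra hcon
  push_neg at hcon
  set X := |B.det| with hX
  have hX0 : 0 ≤ X := abs_nonneg _
  set Y := X ^ ((d:ℝ))⁻¹ with hY
  have hYd : Y ^ d = X := Real.rpow_inv_natCast_pow hX0 hd
  have hY0 : 0 ≤ Y := Real.rpow_nonneg hX0 _
  have hYgt : 4 * H < Y := by
    by_contra hle
    push_neg at hle
    have : Y ^ d ≤ (4 * H) ^ d := pow_le_pow_left₀ hY0 hle d
    rw [hYd] at this
    linarith
  have hεpos : (0:ℝ) < (Y - 4 * H) / 4 := by linarith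
  have hkey := key _ hεpos
  have hlt : 4 * H + 2 * ((Y - 4 * H) / 4) < Y := by linarith
  have h0le : 0 ≤ 4 * H + 2 * ((Y - 4 * H) / 4) := by linarith
  have : (4 * H + 2 * ((Y - 4 * H) / 4)) ^ d < Y ^ d := pow_lt_pow_left₀ hlt h0le hd
  rw [hYd] at this
  linarith

end
noncomputable def ip {n : ℕ} (x y : Fin n → ℝ) : ℝ := ∑ k, x k * y k

theorem ip_comm {n : ℕ} (x y : Fin n → ℝ) : ip x y = ip y x :=
  Finset.sum_congr rfl fun k _ => mul_comm _ _

theorem ip_sub_right {n : ℕ} (x y z : Fin n → ℝ) :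
    ip x (fun k => y k - z k) = ip x y - ip x z := by
  unfold ip
  rw [← Finset.sum_sub_distrib]
  exact Finset.sum_congr rfl fun k _ => by ring

theorem ip_add_right {n : ℕ} (x y z : Fin n → ℝ) :
    ip x (fun k => y k + z k) = ip x y + ip x z := by
  unfold ip
  rw [← Finset.sum_add_distrib]
  exact Finset.sum_congr rfl fun k _ => by ring

theorem ip_sum_right {n : ℕ} (x : Fin n → ℝ) (F : Finset ℕ) (g : ℕ → ℝ)
    (u : ℕ → Fin n → ℝ) :
    ip x (fun kk => ∑ l ∈ F, g l * u l kk) = ∑ l ∈ F, g l * ip x (u l) := by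
  unfold ip
  simp_rw [Finset.mul_sum]
  rw [Finset.sum_comm]
  refine Finset.sum_congr rfl fun l _ => ?_
  exact Finset.sum_congr rfl fun kk _ => by ring

theorem ip_smul_left {n : ℕ} (c : ℝ) (x y : Fin n → ℝ) :
    ip (fun k => c * x k) y = c * ip x y := by
  unfold ip
  rw [Finset.mul_sum]
  exact Finset.sum_congr rfl fun k _ => by ring

theorem ip_smul_right {n : ℕ} (c : ℝ) (x y : Fin n → ℝ) :
    ip x (fun k => c * y k) = c * ip x y := by
  unfold ip
  rw [Finset.mul_sum]
  exact Finset.sum_congr rfl fun k _ => by ring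

theorem ip_self_nonneg {n : ℕ} (x : Fin n → ℝ) : 0 ≤ ip x x :=
  Finset.sum_nonneg fun k _ => mul_self_nonneg _

theorem ip_self_eq {n : ℕ} (x : Fin n → ℝ) : ip x x = ∑ k, x k ^ 2 :=
  Finset.sum_congr rfl fun k _ => by ring

theorem stmt1 :
    ∃ C : ℝ, 0 < C ∧
      ∀ (m n : ℕ) (A : Matrix (Fin m) (Fin n) ℝ), n ≤ m → 4 ≤ n →
        ∃ (d : ℕ) (V : Matrix (Fin d) (Fin n) ℝ),
          4 * d ≤ n ∧ V * Vᵀ = 1 ∧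
          ∀ j : Fin m,
            Real.sqrt (∑ k, ((A * (1 - Vᵀ * V) : Matrix (Fin m) (Fin n) ℝ) j k) ^ 2) ≤
              C * herdisc A * Real.log (8 * m / n) := by
  classical
  refine ⟨8, by norm_num, ?_⟩
  intro m n A hnm hn4
  have hH0 : 0 ≤ herdisc A := herdisc_nonneg A
  set H := herdisc A with hHdef
  set t : ℝ := 16 * H with htdef
  have ht0 : 0 ≤ t := by rw [htdef]; linarith
  have hm0 : 0 < m := by omega
  have hn0 : 0 < n := by omega
  have hlog : 2 ≤ Real.log (8 * m / n) := by
    have h8 : (8:ℝ) ≤ 8 * m / n := by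
      rw [le_div_iff₀ (by positivity : (0:ℝ) < n)]
      have hc : (n:ℝ) ≤ m := by exact_mod_cast hnm
      nlinarith [hc, (by positivity : (0:ℝ) < (n:ℝ))]
    have hl8 : (2:ℝ) ≤ Real.log 8 := by
      have h3 : Real.log 8 = 3 * Real.log 2 := by
        rw [show (8:ℝ) = 2^3 by norm_num, Real.log_pow]
        push_cast; ring
      have h2 := Real.log_two_gt_d9
      nlinarith
    calc (2:ℝ) ≤ Real.log 8 := hl8
      _ ≤ Real.log (8*m/n) := Real.log_le_log (by norm_num) h8
  -- builder of the conclusion from an orthonormal family making all residuals small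
  have build : ∀ (k : ℕ) (v : ℕ → Fin n → ℝ), 4 * k ≤ n →
      (∀ i l, i < k → l < k → ip (v i) (v l) = if i = l then 1 else 0) →
      (∀ j, ∑ kk, (A j kk - ∑ l ∈ Finset.range k, ip (v l) (A j) * v l kk) ^ 2 ≤ t ^ 2) →
      (∃ (d : ℕ) (V : Matrix (Fin d) (Fin n) ℝ),
        4 * d ≤ n ∧ V * Vᵀ = 1 ∧
        ∀ j : Fin m,
          Real.sqrt (∑ k, ((A * (1 - Vᵀ * V) : Matrix (Fin m) (Fin n) ℝ) j k) ^ 2) ≤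
            8 * herdisc A * Real.log (8 * m / n)) := by
    intro k v h4k horth hsmall
    set V : Matrix (Fin k) (Fin n) ℝ := Matrix.of (fun i kk => v i kk) with hV
    have hVapp : ∀ (i : Fin k) kk, V i kk = v i kk := fun i kk => rfl
    refine ⟨k, V, h4k, ?_, ?_⟩
    · ext i l
      rw [Matrix.mul_apply, Matrix.one_apply]
      have hip : (∑ kk, V i kk * Vᵀ kk l) = ip (v (i:ℕ)) (v (l:ℕ)) := by
        unfold ip
        exact Finset.sum_congr rfl fun kk _ => rfl
      rw [hip, horth i l i.isLt l.isLt]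
      by_cases h : i = l
      · simp [h]
      · have h' : ¬ ((i:ℕ) = (l:ℕ)) := fun hh => h (Fin.val_injective hh)
        simp [h, h']
    · intro j
      have hrow : ∀ kk, (A * (1 - Vᵀ * V) : Matrix (Fin m) (Fin n) ℝ) j kk
          = A j kk - ∑ l ∈ Finset.range k, ip (v l) (A j) * v l kk := by
        intro kk
        rw [Matrix.mul_apply]
        have hterm : ∀ p, A j p * ((1 - Vᵀ * V) : Matrix (Fin n) (Fin n) ℝ) p kk
            = (if p = kk then A j p else 0) - ∑ i : Fin k, A j p * (v i p * v i kk) := by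
          intro p
          rw [Matrix.sub_apply, Matrix.one_apply, Matrix.mul_apply]
          rw [mul_sub]
          congr 1
          · split <;> simp
          · rw [Finset.mul_sum]
            exact Finset.sum_congr rfl fun i _ => by
              rw [Matrix.transpose_apply]
              rfl
        simp_rw [hterm]
        rw [Finset.sum_sub_distrib]
        congr 1
        · rw [Finset.sum_ite_eq' Finset.univ kk (fun p => A j p)]
          simp
        · rw [Finset.sum_comm]
          have h2 : ∀ i : Fin k, (∑ p, A j p * (v i p * v i kk))
              = ip (v (i:ℕ)) (A j) * v (i:ℕ) kk := by
            intro i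
            unfold ip
            rw [Finset.sum_mul]
            exact Finset.sum_congr rfl fun p _ => by ring
          simp_rw [h2]
          rw [← Fin.sum_univ_eq_sum_range (fun l => ip (v l) (A j) * v l kk) k]
      have hsum : (∑ kk, ((A * (1 - Vᵀ * V) : Matrix (Fin m) (Fin n) ℝ) j kk) ^ 2)
          = ∑ kk, (A j kk - ∑ l ∈ Finset.range k, ip (v l) (A j) * v l kk) ^ 2 :=
        Finset.sum_congr rfl fun kk _ => by rw [hrow kk]
      rw [hsum]
      calc Real.sqrt (∑ kk, (A j kk - ∑ l ∈ Finset.range k, ip (v l) (A j) * v l kk) ^ 2)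
          ≤ Real.sqrt (t ^ 2) := Real.sqrt_le_sqrt (hsmall j)
        _ = t := Real.sqrt_sq ht0
        _ ≤ 8 * herdisc A * Real.log (8 * m / n) := by
            rw [htdef, hHdef]
            nlinarith [hlog, hH0]
  -- the greedy propositions
  set D := n / 4 + 1 with hD
  set GOOD : ℕ → Prop := fun k => ∃ (v : ℕ → Fin n → ℝ) (r : ℕ → Fin m),
    (∀ i l, i < k → l < k → ip (v i) (v l) = if i = l then 1 else 0) ∧
    (∀ i, i < k → (A (r i) : Fin n → ℝ)
        = fun kk => ∑ l ∈ Finset.range k, ip (v l) (A (r i)) * v l kk) ∧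
    (∀ i l, i < k → l < k → i < l → ip (v l) (A (r i)) = 0) ∧
    (∀ i, i < k → t < ip (v i) (A (r i))) with hGOOD
  have hD4 : n ≤ 4 * D := by rw [hD]; omega
  have hDpos : 0 < D := by rw [hD]; omega
  -- main induction
  have hmain : ∀ k, k ≤ D →
      ((∃ (d : ℕ) (V : Matrix (Fin d) (Fin n) ℝ),
        4 * d ≤ n ∧ V * Vᵀ = 1 ∧
        ∀ j : Fin m,
          Real.sqrt (∑ kk, ((A * (1 - Vᵀ * V) : Matrix (Fin m) (Fin n) ℝ) j kk) ^ 2) ≤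
            8 * herdisc A * Real.log (8 * m / n)) ∨ GOOD k) := by
    intro k
    induction k with
    | zero =>
      intro _
      right
      rw [hGOOD]
      refine ⟨fun _ _ => 0, fun _ => ⟨0, hm0⟩, ?_, ?_, ?_, ?_⟩
      · intro i l hi hl; exact absurd hi (Nat.not_lt_zero _)
      · intro i hi; exact absurd hi (Nat.not_lt_zero _)
      · intro i l hi hl hlt; exact absurd hi (Nat.not_lt_zero _)
      · intro i hi; exact absurd hi (Nat.not_lt_zero _)
    | succ k ih =>
      intro hk1
      rcases ih (by omega) with hconcl | hgood
      · exact Or.inl hconcl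
      rw [hGOOD] at hgood
      obtain ⟨v, r, c1, c2, c3, c4⟩ := hgood
      by_cases hsm : ∀ j, ∑ kk, (A j kk - ∑ l ∈ Finset.range k, ip (v l) (A j) * v l kk) ^ 2 ≤ t ^ 2
      · left
        have h4k : 4 * k ≤ n := by
          have hkD : k + 1 ≤ D := hk1
          rw [hD] at hkD
          omega
        exact build k v h4k c1 hsm
      · right
        push_neg at hsm
        obtain ⟨j, hbig⟩ := hsm
        set w : Fin n → ℝ := fun kk => A j kk - ∑ l ∈ Finset.range k, ip (v l) (A j) * v l kk with hw
        have hww_pos : t ^ 2 < ip w w := by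
          rw [ip_self_eq]
          exact hbig
        have hww0 : 0 ≤ ip w w := ip_self_nonneg w
        set sv := Real.sqrt (ip w w) with hsv
        have hts : t < sv := (Real.lt_sqrt ht0).mpr hww_pos
        have hs0 : 0 < sv := lt_of_le_of_lt ht0 hts
        have hss : sv * sv = ip w w := Real.mul_self_sqrt hww0
        have hworth : ∀ l, l < k → ip (v l) w = 0 := by
          intro l hl
          rw [hw, ip_sub_right, ip_sum_right]
          have hsum : ∑ l' ∈ Finset.range k, ip (v l') (A j) * ip (v l) (v l')
              = ip (v l) (A j) := by
            rw [Finset.sum_eq_single l]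
            · rw [c1 l l hl hl]; simp
            · intro l' hl' hne
              rw [c1 l l' hl (Finset.mem_range.mp hl')]
              have hne' : ¬ (l = l') := fun h => hne h.symm
              simp [hne']
            · intro hnot; exact absurd (Finset.mem_range.mpr hl) hnot
          rw [hsum]
          ring
        have hwaj : ip w (A j) = ip w w := by
          have hAj : (A j : Fin n → ℝ)
              = fun kk => w kk + ∑ l ∈ Finset.range k, ip (v l) (A j) * v l kk := by
            funext kk
            rw [hw]
            ring
          conv_lhs => rw [hAj]
          rw [ip_add_right, ip_sum_right]
          have hz : ∀ l' ∈ Finset.range k, ip (v l') (A j) * ip w (v l') = 0 := by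
            intro l' hl'
            rw [ip_comm w (v l'), hworth l' (Finset.mem_range.mp hl')]
            ring
          rw [Finset.sum_eq_zero hz]
          ring
        set u : Fin n → ℝ := fun kk => sv⁻¹ * w kk with hu
        have huv : ∀ l, l < k → ip (v l) u = 0 := by
          intro l hl
          rw [hu, ip_smul_right, hworth l hl]
          ring
        have huu : ip u u = 1 := by
          rw [hu, ip_smul_left, ip_smul_right, ← hss]
          field_simp
        have huaj : ip u (A j) = sv := by
          rw [hu, ip_smul_left, hwaj, ← hss]
          field_simp
        have huar : ∀ i, i < k → ip u (A (r i)) = 0 := by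
          intro i hi
          conv_lhs => rw [c2 i hi]
          rw [ip_sum_right]
          refine Finset.sum_eq_zero fun l hl => ?_
          rw [ip_comm u (v l), huv l (Finset.mem_range.mp hl)]
          ring
        rw [hGOOD]
        refine ⟨Function.update v k u, Function.update r k j, ?_, ?_, ?_, ?_⟩
        · intro i l hi hl
          rcases Nat.lt_succ_iff_lt_or_eq.mp hi with hik | hik
          · rcases Nat.lt_succ_iff_lt_or_eq.mp hl with hlk | hlk
            · rw [Function.update_of_ne (Nat.ne_of_lt hik), Function.update_of_ne (Nat.ne_of_lt hlk)]
              exact c1 i l hik hlk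
            · subst hlk
              rw [Function.update_of_ne (Nat.ne_of_lt hik), Function.update_self]
              rw [if_neg (Nat.ne_of_lt hik)]
              exact huv i hik
          · subst hik
            rcases Nat.lt_succ_iff_lt_or_eq.mp hl with hlk | hlk
            · rw [Function.update_self, Function.update_of_ne (Nat.ne_of_lt hlk), ip_comm]
              rw [if_neg (Ne.symm (Nat.ne_of_lt hlk))]
              exact huv l hlk
            · subst hlk
              rw [Function.update_self, if_pos rfl]
              exact huu
        · intro i hi
          rcases Nat.lt_succ_iff_lt_or_eq.mp hi with hik | hik
          · rw [Function.update_of_ne (Nat.ne_of_lt hik)]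
            funext kk
            rw [Finset.sum_range_succ, Function.update_self]
            have hsumeq : ∑ l ∈ Finset.range k,
                ip (Function.update v k u l) (A (r i)) * Function.update v k u l kk
                = ∑ l ∈ Finset.range k, ip (v l) (A (r i)) * v l kk :=
              Finset.sum_congr rfl fun l hl => by
                rw [Function.update_of_ne (Nat.ne_of_lt (Finset.mem_range.mp hl))]
            rw [hsumeq, huar i hik, zero_mul, add_zero]
            exact congrFun (c2 i hik) kk
          · subst hik
            rw [Function.update_self]
            funext kk
            rw [Finset.sum_range_succ, Function.update_self]
            have hsumeq : ∑ l ∈ Finset.range i,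
                ip (Function.update v i u l) (A j) * Function.update v i u l kk
                = ∑ l ∈ Finset.range i, ip (v l) (A j) * v l kk :=
              Finset.sum_congr rfl fun l hl => by
                rw [Function.update_of_ne (Nat.ne_of_lt (Finset.mem_range.mp hl))]
            rw [hsumeq, huaj]
            have h1 : sv * u kk = w kk := by
              rw [hu]
              show sv * (sv⁻¹ * w kk) = w kk
              field_simp
            rw [h1]
            have h2 : w kk = A j kk - ∑ l ∈ Finset.range i, ip (v l) (A j) * v l kk := by
              rw [hw]
            rw [h2]
            ring
        · intro i l hi hl hlt
          rcases Nat.lt_succ_iff_lt_or_eq.mp hl with hlk | hlk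
          · have hik : i < k := lt_trans hlt hlk
            rw [Function.update_of_ne (Nat.ne_of_lt hlk), Function.update_of_ne (Nat.ne_of_lt hik)]
            exact c3 i l hik hlk hlt
          · subst hlk
            have hik : i < l := hlt
            rw [Function.update_self, Function.update_of_ne (Nat.ne_of_lt hik)]
            exact huar i hik
        · intro i hi
          rcases Nat.lt_succ_iff_lt_or_eq.mp hi with hik | hik
          · rw [Function.update_of_ne (Nat.ne_of_lt hik), Function.update_of_ne (Nat.ne_of_lt hik)]
            exact c4 i hik
          · subst hik
            rw [Function.update_self, Function.update_self, huaj]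
            exact hts
  -- contradiction with GOOD D
  have contra : ¬ GOOD D := by
    rw [hGOOD]
    rintro ⟨v, r, c1, c2, c3, c4⟩
    set Vm : Matrix (Fin D) (Fin n) ℝ := Matrix.of (fun i kk => v i kk) with hVm
    set Bm : Matrix (Fin D) (Fin n) ℝ := A.submatrix (fun i : Fin D => r i) id with hBm
    have hMentry : ∀ i l : Fin D, (Bm * Vmᵀ) i l = ip (v l) (A (r i)) := by
      intro i l
      rw [Matrix.mul_apply, ip_comm]
      exact Finset.sum_congr rfl fun kk _ => rfl
    have hdet_eq : (Bm * Vmᵀ).det = ∏ i, (Bm * Vmᵀ) i i := by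
      apply Matrix.det_of_lowerTriangular
      intro i l h
      have hli : (i : ℕ) < (l : ℕ) := h
      rw [hMentry]
      exact c3 i l i.isLt l.isLt hli
    have hdet_lb : t ^ D < (Bm * Vmᵀ).det := by
      rw [hdet_eq]
      rcases eq_or_lt_of_le ht0 with h0 | h0
      · rw [← h0, zero_pow (by omega : D ≠ 0)]
        apply Finset.prod_pos
        intro i _
        rw [hMentry]
        have := c4 i i.isLt
        linarith
      · calc t ^ D = ∏ _i : Fin D, t := by
              rw [Finset.prod_const, Finset.card_univ, Fintype.card_fin]
          _ < ∏ i, (Bm * Vmᵀ) i i :=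
              Finset.prod_lt_prod_of_nonempty (fun i _ => h0)
                (fun i _ => by rw [hMentry]; exact c4 i i.isLt)
                ⟨⟨0, hDpos⟩, Finset.mem_univ _⟩
    have hVVt : Vm * Vmᵀ = 1 := by
      ext i l
      rw [Matrix.mul_apply, Matrix.one_apply]
      have h1 : (∑ kk, Vm i kk * Vmᵀ kk l) = ip (v i) (v l) :=
        Finset.sum_congr rfl fun kk _ => rfl
      rw [h1, c1 i l i.isLt l.isLt]
      by_cases h : i = l
      · simp [h]
      · have h' : ¬ ((i:ℕ) = (l:ℕ)) := fun hh => h (Fin.val_injective hh)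
        simp [h, h']
    set F := Finset.univ.filter (fun g : Fin D → Fin n => StrictMono g) with hF
    have hsq : ∑ g ∈ F, (Vm.submatrix id g).det ^ 2 = 1 := by
      have hcb := cauchy_binet Vm Vmᵀ
      rw [hVVt, Matrix.det_one] at hcb
      rw [hF, hcb]
      refine Finset.sum_congr rfl fun g hg => ?_
      have hT : (Vmᵀ.submatrix g id) = (Vm.submatrix id g)ᵀ :=
        (Matrix.transpose_submatrix Vm id g).symm
      rw [hT, Matrix.det_transpose]
      ring
    have hSv2 : (∑ g ∈ F, |(Vm.submatrix id g).det|) ^ 2 ≤ (F.card : ℝ) := by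
      calc (∑ g ∈ F, |(Vm.submatrix id g).det|) ^ 2
          ≤ (F.card : ℝ) * ∑ g ∈ F, |(Vm.submatrix id g).det| ^ 2 :=
            sq_sum_le_card_mul_sum_sq
        _ = (F.card : ℝ) * ∑ g ∈ F, (Vm.submatrix id g).det ^ 2 := by
            congr 1
            exact Finset.sum_congr rfl fun g _ => sq_abs _
        _ = (F.card : ℝ) := by rw [hsq, mul_one]
    have hSv : (∑ g ∈ F, |(Vm.submatrix id g).det|) ≤ Real.sqrt ((2:ℝ) ^ n) := by
      have hcard : (F.card : ℝ) ≤ (2:ℝ) ^ n := by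
        have h1 : F.card ≤ (Finset.univ : Finset (Finset (Fin n))).card := by
          apply Finset.card_le_card_of_injOn (fun g => Finset.image g Finset.univ)
          · intro g _
            exact Finset.mem_univ _
          · intro g1 hg1 g2 hg2 himg
            haveI : WellFoundedLT (Fin D) := inferInstance
            have hs1 : StrictMono g1 := (Finset.mem_filter.mp (Finset.mem_coe.mp hg1)).2
            have hs2 : StrictMono g2 := (Finset.mem_filter.mp (Finset.mem_coe.mp hg2)).2
            have hrange : Set.range g1 = Set.range g2 := by
              have := congrArg (fun (S : Finset (Fin n)) => (S : Set (Fin n))) himg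
              simpa [Finset.coe_image] using this
            exact (StrictMono.range_inj hs1 hs2).mp hrange
        have h2 : (Finset.univ : Finset (Finset (Fin n))).card = 2 ^ n := by
          rw [Finset.card_univ, Fintype.card_finset, Fintype.card_fin]
        have h3 : F.card ≤ 2 ^ n := h2 ▸ h1
        exact_mod_cast h3
      refine (Real.le_sqrt (Finset.sum_nonneg fun g _ => abs_nonneg _) (by positivity)).mpr ?_
      exact le_trans hSv2 hcard
    have hdet_ub : (Bm * Vmᵀ).det ≤ (4 * H) ^ D * Real.sqrt ((2:ℝ) ^ n) := by
      rw [cauchy_binet]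
      have hterm : ∀ g ∈ F, (Bm.submatrix id g).det * (Vmᵀ.submatrix g id).det
          ≤ (4 * H) ^ D * |(Vm.submatrix id g).det| := by
        intro g hg
        have hsm : StrictMono g := (Finset.mem_filter.mp hg).2
        have hb : |(Bm.submatrix id g).det| ≤ (4 * H) ^ D := by
          have hBsub : Bm.submatrix id g = A.submatrix (fun i : Fin D => r i) g := rfl
          rw [hBsub, hHdef]
          exact det_le_pow A _ g hsm.injective
        have hVsub : |(Vmᵀ.submatrix g id).det| = |(Vm.submatrix id g).det| := by
          have hT : (Vmᵀ.submatrix g id) = (Vm.submatrix id g)ᵀ :=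
            (Matrix.transpose_submatrix Vm id g).symm
          rw [hT, Matrix.det_transpose]
        calc (Bm.submatrix id g).det * (Vmᵀ.submatrix g id).det
            ≤ |(Bm.submatrix id g).det * (Vmᵀ.submatrix g id).det| := le_abs_self _
          _ = |(Bm.submatrix id g).det| * |(Vmᵀ.submatrix g id).det| := abs_mul _ _
          _ ≤ (4 * H) ^ D * |(Vm.submatrix id g).det| := by
              rw [hVsub]
              exact mul_le_mul_of_nonneg_right hb (abs_nonneg _)
      calc ∑ g ∈ F, (Bm.submatrix id g).det * (Vmᵀ.submatrix g id).det
          ≤ ∑ g ∈ F, (4 * H) ^ D * |(Vm.submatrix id g).det| := Finset.sum_le_sum hterm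
        _ = (4 * H) ^ D * ∑ g ∈ F, |(Vm.submatrix id g).det| := by rw [Finset.mul_sum]
        _ ≤ (4 * H) ^ D * Real.sqrt ((2:ℝ) ^ n) :=
            mul_le_mul_of_nonneg_left hSv (by positivity)
    have hsqrt : Real.sqrt ((2:ℝ) ^ n) ≤ 4 ^ D := by
      have h1 : (2:ℝ) ^ n ≤ ((4:ℝ) ^ D) ^ 2 := by
        have h2 : ((4:ℝ) ^ D) ^ 2 = 2 ^ (4 * D) := by
          rw [show (4:ℝ) = 2^2 by norm_num, ← pow_mul, ← pow_mul]
          ring_nf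
        rw [h2]
        exact pow_le_pow_right₀ (by norm_num) hD4
      calc Real.sqrt ((2:ℝ)^n) ≤ Real.sqrt (((4:ℝ)^D)^2) := Real.sqrt_le_sqrt h1
        _ = 4 ^ D := Real.sqrt_sq (by positivity)
    have hfin : t ^ D < t ^ D := by
      calc t ^ D < (Bm * Vmᵀ).det := hdet_lb
        _ ≤ (4 * H) ^ D * Real.sqrt ((2:ℝ) ^ n) := hdet_ub
        _ ≤ (4 * H) ^ D * 4 ^ D := mul_le_mul_of_nonneg_left hsqrt (by positivity)
        _ = t ^ D := by
            rw [← mul_pow, htdef]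
            ring_nf
    exact lt_irrefl _ hfin
  rcases hmain D le_rfl with hconcl | hgood
  · exact hconcl
  · exact absurd hgood contra
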